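/- arXiv:1009.3662 — 2 statements merged into one kernel-verified Lean document; each statement's English description precedes it below -/
import Mathlib

section
/- Let A be a commutative ring and let d be a nonzero integer. A Laurent polynomial f ∈ A[T,T⁻¹] satisfies the d-cocycle condition Δ(f) = f ⊗ 1 + (T^d ⊗ 1)·(1 ⊗ f) in A[T,T⁻¹] ⊗[A] A[T,T⁻¹] if and only if there exists a ∈ A such that f = a·(T^d − 1). (This is the case d ≠ 0 of Proposition A.1: every 1-cocycle of 𝔾ₘ over A with values in V_d is a coboundary, i.e. H¹(𝔾ₘ ⊗ A, V_d) = 0.) -/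
open LaurentPolynomial TensorProduct

private lemma sum_smul_T' {A : Type*} [CommRing A] (f : LaurentPolynomial A) :
    f = f.coeff.sum fun n a => a • T n := by
  conv_lhs => rw [← AddMonoidAlgebra.ofCoeff_coeff f, ← f.coeff.sum_single,
    AddMonoidAlgebra.ofCoeff_finsuppSum]
  apply Finsupp.sum_congr
  intro n _
  show AddMonoidAlgebra.single n (f.coeff n) = (f.coeff n) • AddMonoidAlgebra.single n (1:A)
  rw [AddMonoidAlgebra.smul_single, smul_eq_mul, mul_one]

private lemma L_sum' {A : Type*} [CommRing A] (f : LaurentPolynomial A) (g : ℤ → ℤ × ℤ) :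
    (f.coeff.sum fun n a => a • (Finsupp.single (g n) (1:A))) = Finsupp.mapDomain g f.coeff := by
  rw [Finsupp.mapDomain]
  apply Finsupp.sum_congr
  intro n _
  rw [Finsupp.smul_single, smul_eq_mul, mul_one]

/-- **Proposition A.1, case `d ≠ 0`** (Hain, "Remarks on Non-Abelian Cohomology of
Proalgebraic Groups"). Let `A` be a commutative ring and `Δ` the comultiplication on
`A[T,T⁻¹]`, i.e. the unique `A`-algebra homomorphism with `Δ(Tⁿ) = Tⁿ ⊗ Tⁿ`.
For `d ≠ 0`, a Laurent polynomial `f` satisfies the `d`-cocycle condition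
`Δ(f) = f ⊗ 1 + (T^d ⊗ 1)·(1 ⊗ f)` if and only if `f = a·(T^d − 1)` for some `a ∈ A`;
that is, every 1-cocycle of `𝔾ₘ ⊗ A` with values in `V_d` is a coboundary, so
`H¹(𝔾ₘ ⊗ A, V_d) = 0`. -/
theorem cocycle_iff_coboundary (A : Type*) [CommRing A] (d : ℤ) (hd : d ≠ 0)
    (Δ : LaurentPolynomial A →ₐ[A] TensorProduct A (LaurentPolynomial A) (LaurentPolynomial A))
    (hΔ : ∀ n : ℤ, Δ (T n) = T n ⊗ₜ[A] T n) (f : LaurentPolynomial A) :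
    Δ f = f ⊗ₜ[A] (1 : LaurentPolynomial A) +
        ((T d : LaurentPolynomial A) ⊗ₜ[A] (1 : LaurentPolynomial A)) *
          ((1 : LaurentPolynomial A) ⊗ₜ[A] f) ↔
      ∃ a : A, f = C a * (T d - 1) := by
  constructor
  · intro h
    set L : LaurentPolynomial A ⊗[A] LaurentPolynomial A →ₗ[A] (ℤ × ℤ →₀ A) :=
      (finsuppTensorFinsupp' A ℤ ℤ).toLinearMap ∘ₗ
        TensorProduct.map (AddMonoidAlgebra.coeffLinearEquiv A).toLinearMap
          (AddMonoidAlgebra.coeffLinearEquiv A).toLinearMap with hL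
    have Lsingle : ∀ (n m : ℤ), L ((T n : LaurentPolynomial A) ⊗ₜ[A] (T m : LaurentPolynomial A))
        = Finsupp.single (n, m) (1:A) := by
      intro n m
      show finsuppTensorFinsupp' A ℤ ℤ (Finsupp.single n (1:A) ⊗ₜ[A] Finsupp.single m (1:A)) = _
      exact (finsuppTensorFinsupp'_single_tmul_single A ℤ ℤ n m 1 1).trans (by rw [mul_one])
    have key : Finsupp.mapDomain (fun k => (k,k)) f.coeff
        = Finsupp.mapDomain (fun k => (k,(0:ℤ))) f.coeff + Finsupp.mapDomain (fun k => ((d:ℤ),k)) f.coeff := by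
      have e1 : L (Δ f) = Finsupp.mapDomain (fun k => (k,k)) f.coeff := by
        conv_lhs => rw [sum_smul_T' f, map_finsuppSum, map_finsuppSum]
        rw [← L_sum' f (fun k => (k,k))]
        apply Finsupp.sum_congr
        intro n _
        rw [map_smul, hΔ, map_smul]
        congr 1
        exact Lsingle n n
      have e2 : L (f ⊗ₜ[A] (1 : LaurentPolynomial A))
          = Finsupp.mapDomain (fun k => (k,(0:ℤ))) f.coeff := by
        conv_lhs => rw [sum_smul_T' f, Finsupp.sum, sum_tmul]
        rw [map_sum, ← L_sum' f (fun k => (k,(0:ℤ))), Finsupp.sum]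
        apply Finset.sum_congr rfl
        intro n _
        rw [← smul_tmul', map_smul]
        congr 1
        rw [← T_zero]
        exact Lsingle n 0
      have e3 : L (((T d : LaurentPolynomial A) ⊗ₜ[A] (1 : LaurentPolynomial A)) *
            ((1 : LaurentPolynomial A) ⊗ₜ[A] f)) = Finsupp.mapDomain (fun k => ((d:ℤ),k)) f.coeff := by
        rw [Algebra.TensorProduct.tmul_mul_tmul, mul_one, one_mul]
        conv_lhs => rw [sum_smul_T' f, Finsupp.sum, tmul_sum]
        rw [map_sum, ← L_sum' f (fun k => ((d:ℤ),k)), Finsupp.sum]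
        apply Finset.sum_congr rfl
        intro n _
        rw [tmul_smul, map_smul]
        congr 1
        exact Lsingle d n
      rw [← e1, ← e2, ← e3, h, map_add]
    have inj1 : Function.Injective (fun k : ℤ => (k,k)) := fun a b hab => congrArg Prod.fst hab
    have inj2 : Function.Injective (fun k : ℤ => (k,(0:ℤ))) := fun a b hab =>
      congrArg Prod.fst hab
    have inj3 : Function.Injective (fun k : ℤ => ((d:ℤ),k)) := fun a b hab =>
      congrArg Prod.snd hab
    have hvanish : ∀ n : ℤ, n ≠ 0 → n ≠ d → f.coeff n = 0 := by
      intro n hn0 hnd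
      have hk := Finsupp.ext_iff.mp key (n, n)
      rw [Finsupp.add_apply, Finsupp.mapDomain_apply inj1,
        Finsupp.mapDomain_notin_range _ _ (by
          rintro ⟨k, hk2⟩
          exact hn0 (congrArg Prod.snd hk2).symm),
        Finsupp.mapDomain_notin_range _ _ (by
          rintro ⟨k, hk2⟩
          exact hnd (congrArg Prod.fst hk2).symm)] at hk
      simpa using hk
    have h0 : f.coeff 0 = - f.coeff d := by
      have hk := Finsupp.ext_iff.mp key (d, 0)
      rw [Finsupp.add_apply, Finsupp.mapDomain_apply inj2, Finsupp.mapDomain_apply inj3,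
        Finsupp.mapDomain_notin_range _ _ (by
          rintro ⟨k, hk2⟩
          have h1 := congrArg Prod.fst hk2
          have h2 := congrArg Prod.snd hk2
          exact hd (h1.symm.trans h2))] at hk
      exact eq_neg_of_add_eq_zero_left (by rw [add_comm]; exact hk.symm)
    refine ⟨f.coeff d, ?_⟩
    have expand : C (f.coeff d) * (T d - 1) = AddMonoidAlgebra.single d (f.coeff d) - AddMonoidAlgebra.single 0 (f.coeff d) := by
      rw [mul_sub, mul_one, ← single_eq_C_mul_T, ← single_eq_C]
    rw [expand]
    ext m
    show f.coeff m = (Finsupp.single d (f.coeff d) - Finsupp.single (0:ℤ) (f.coeff d)) m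
    rw [Finsupp.sub_apply, Finsupp.single_apply, Finsupp.single_apply]
    by_cases hm : m = d
    · subst hm; rw [if_pos rfl, if_neg (Ne.symm hd)]; ring
    · by_cases hm0 : m = 0
      · subst hm0; rw [if_neg hd, if_pos rfl, h0]; ring
      · rw [if_neg (fun hh => hm hh.symm), if_neg (fun hh => hm0 hh.symm),
          hvanish m hm0 hm]; ring
  · rintro ⟨a, rfl⟩
    have hC : (C a : LaurentPolynomial A) = algebraMap A _ a := rfl
    rw [map_mul, map_sub, map_one, hΔ, hC, AlgHom.commutes, ← Algebra.smul_def,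
      ← Algebra.smul_def]
    simp only [smul_sub, sub_tmul, tmul_sub, ← smul_tmul', tmul_smul, mul_sub, sub_mul,
      Algebra.TensorProduct.tmul_mul_tmul, one_mul, mul_one, mul_smul_comm, smul_mul_assoc,
      Algebra.TensorProduct.one_def]
    module
end

section
/- Let π : G → Q be a surjective group homomorphism with kernel U, and suppose there is a chain of subgroups U = U₁ ≥ U₂ ≥ ⋯ ≥ U_N ≥ U_{N+1} = {1} such that each Uᵢ is normal in G and the commutator subgroup satisfies [U, Uᵢ] ≤ U_{i+1} for 1 ≤ i ≤ N (so each quotient Uᵢ/U_{i+1} is abelian and the conjugation action of G on Uᵢ/U_{i+1} descends to an action of Q). Assume that for each i with 1 ≤ i ≤ N, every crossed homomorphism c : Q → Uᵢ/U_{i+1} (i.e. every map satisfying c(q₁q₂) = c(q₁)·(q₁ • c(q₂))) is principal (i.e. of the form c(q) = m·(q • m)⁻¹ for some fixed m ∈ Uᵢ/U_{i+1}). Then any two group-homomorphism sections s₀, s₁ : Q → G of π are conjugate by an element of U: there exists u ∈ U with s₁(q) = u·s₀(q)·u⁻¹ for all q ∈ Q. (This is the group-theoretic content of Corollary A.2,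 proved by induction on the length N of the central series.) -/
/-- **Corollary A.2, group-theoretic form** (Hain, "Remarks on Non-Abelian Cohomology of
Proalgebraic Groups"). Let `π : G → Q` be a surjective group homomorphism with kernel
`U = ker π`, and suppose there is a chain of subgroups
`U = U₁ ≥ U₂ ≥ ⋯ ≥ U_N ≥ U_{N+1} = 1`, each normal in `G`, with `[U, Uᵢ] ≤ U_{i+1}`
for `1 ≤ i ≤ N` (so each `Uᵢ/U_{i+1}` is abelian and carries a conjugation action of `Q`).
Assume that for each `1 ≤ i ≤ N` every crossed homomorphism `c : Q → Uᵢ/U_{i+1}` is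
principal; here this is phrased at the level of `G`: any `c : Q → G` with values in `Uᵢ`
satisfying the crossed-homomorphism identity modulo `U_{i+1}` (with `q` acting by
conjugation through the section `s₀`, a legitimate representative since `U` acts
trivially on `Uᵢ/U_{i+1}`) agrees modulo `U_{i+1}` with a principal one.
Then any two homomorphic sections `s₀, s₁ : Q → G` of `π` are conjugate by an element
of `U`. -/
theorem sections_conjugate_of_central_series {G Q : Type*} [Group G] [Group Q]
    (π : G →* Q) (hπ : Function.Surjective π)
    (N : ℕ) (hN : 1 ≤ N) (U : ℕ → Subgroup G)
    (hU1 : U 1 = π.ker) (hUtop : U (N + 1) = ⊥)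
    (hchain : ∀ i, 1 ≤ i → i ≤ N → U (i + 1) ≤ U i)
    (hnormal : ∀ i, 1 ≤ i → i ≤ N → (U i).Normal)
    (hcomm : ∀ i, 1 ≤ i → i ≤ N → ⁅π.ker, U i⁆ ≤ U (i + 1))
    (s₀ s₁ : Q →* G) (hs₀ : ∀ q, π (s₀ q) = q) (hs₁ : ∀ q, π (s₁ q) = q)
    (hH1 : ∀ i, 1 ≤ i → i ≤ N →
      ∀ c : Q → G, (∀ q, c q ∈ U i) →
        (∀ q₁ q₂ : Q,
            (c (q₁ * q₂))⁻¹ * (c q₁ * (s₀ q₁ * c q₂ * (s₀ q₁)⁻¹)) ∈ U (i + 1)) →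
        ∃ m ∈ U i, ∀ q : Q,
            (c q)⁻¹ * (m * (s₀ q * m⁻¹ * (s₀ q)⁻¹)) ∈ U (i + 1)) :
    ∃ u ∈ π.ker, ∀ q : Q, s₁ q = u * s₀ q * u⁻¹ := by
  -- every `U i` with `1 ≤ i ≤ N+1` is contained in the kernel
  have hle : ∀ i, 1 ≤ i → i ≤ N + 1 → U i ≤ π.ker := by
    intro i h1 h2
    induction i with
    | zero => omega
    | succ n ih =>
      rcases Nat.eq_zero_or_pos n with h | h
      · subst h; rw [hU1]
      · exact (hchain n h (by omega)).trans (ih h (by omega))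
  have key : ∀ j, j ≤ N → ∃ u ∈ π.ker, ∀ q, s₁ q * (u * s₀ q * u⁻¹)⁻¹ ∈ U (j + 1) := by
    intro j hj
    induction j with
    | zero =>
      refine ⟨1, one_mem _, fun q => ?_⟩
      rw [hU1, π.mem_ker]
      simp [hs₀, hs₁]
    | succ n ih =>
      obtain ⟨u, hu, hc⟩ := ih (by omega)
      set i := n + 1 with hi
      have hi1 : 1 ≤ i := by omega
      have hiN : i ≤ N := hj
      have hUinorm : (U i).Normal := hnormal i hi1 hiN
      have hVnorm : (U (i + 1)).Normal := by
        rcases Nat.lt_or_ge i N with h | h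
        · exact hnormal (i + 1) (by omega) h
        · have : i = N := le_antisymm hiN h
          rw [this, hUtop]; infer_instance
      set f : G →* G ⧸ U (i + 1) := QuotientGroup.mk' (U (i + 1)) with hf
      have hfeq : ∀ x y : G, x⁻¹ * y ∈ U (i + 1) ↔ f x = f y := by
        intro x y; exact (QuotientGroup.eq).symm
      -- key A : the kernel acts trivially on `U i` mod `U (i+1)`
      have keyA : ∀ a ∈ π.ker, ∀ b ∈ U i, f (a * b * a⁻¹) = f b := by
        intro a ha b hb
        have h1 : a * b * a⁻¹ * b⁻¹ ∈ U (i + 1) :=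
          hcomm i hi1 hiN (Subgroup.commutator_mem_commutator ha hb)
        have h2 : a * b * a⁻¹ = (a * b * a⁻¹ * b⁻¹) * b := by group
        rw [h2, map_mul]
        have : f (a * b * a⁻¹ * b⁻¹) = 1 := (QuotientGroup.eq_one_iff _).mpr h1
        rw [this, one_mul]
      set t : Q → G := fun q => u * s₀ q * u⁻¹ with ht
      set c : Q → G := fun q => s₁ q * (t q)⁻¹ with hcdef
      have hcUi : ∀ q, c q ∈ U i := hc
      -- key B : conjugation by `t q` and `s₀ q` agree mod `U (i+1)` on `U i`
      have keyB : ∀ (q : Q) (b : G), b ∈ U i →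
          f (t q * b * (t q)⁻¹) = f (s₀ q * b * (s₀ q)⁻¹) := by
        intro q b hb
        have hb' : u⁻¹ * b * u ∈ U i := by
          have := hUinorm.conj_mem b hb u⁻¹
          simpa using this
        have hx : s₀ q * (u⁻¹ * b * u) * (s₀ q)⁻¹ ∈ U i := hUinorm.conj_mem _ hb' _
        have e : t q * b * (t q)⁻¹ = u * (s₀ q * (u⁻¹ * b * u) * (s₀ q)⁻¹) * u⁻¹ := by
          rw [ht]; group
        rw [e, keyA u hu _ hx]
        have : f (u⁻¹ * b * u) = f b := by
          have := keyA u⁻¹ (inv_mem hu) b hb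
          simpa using this
        simp only [map_mul, map_inv, this]
      -- the crossed homomorphism condition for `c`
      have hcross : ∀ q₁ q₂ : Q,
          (c (q₁ * q₂))⁻¹ * (c q₁ * (s₀ q₁ * c q₂ * (s₀ q₁)⁻¹)) ∈ U (i + 1) := by
        intro q₁ q₂
        rw [hfeq]
        have e : c (q₁ * q₂) = c q₁ * (t q₁ * c q₂ * (t q₁)⁻¹) := by
          simp only [hcdef, ht, map_mul]; group
        calc f (c (q₁ * q₂)) = f (c q₁) * f (t q₁ * c q₂ * (t q₁)⁻¹) := by
              rw [e, map_mul]
          _ = f (c q₁) * f (s₀ q₁ * c q₂ * (s₀ q₁)⁻¹) := by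
              rw [keyB q₁ (c q₂) (hcUi q₂)]
          _ = f (c q₁ * (s₀ q₁ * c q₂ * (s₀ q₁)⁻¹)) := (map_mul f _ _).symm
      obtain ⟨m, hm, hmeq⟩ := hH1 i hi1 hiN c hcUi hcross
      refine ⟨m * u, mul_mem (hle i hi1 (by omega) hm) hu, fun q => ?_⟩
      have goal' : f ((m * u) * s₀ q * (m * u)⁻¹) = f (s₁ q) := by
        have hfc : f (c q) = f (m * (s₀ q * m⁻¹ * (s₀ q)⁻¹)) := (hfeq _ _).mp (hmeq q)
        have hB := keyB q m⁻¹ (inv_mem hm)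
        have e2 : (m * u) * s₀ q * (m * u)⁻¹ = m * (t q * m⁻¹ * (t q)⁻¹) * (t q) := by
          rw [ht]; group
        have e4 : c q * t q = s₁ q := by rw [hcdef]; group
        calc f ((m * u) * s₀ q * (m * u)⁻¹)
            = f (m * (t q * m⁻¹ * (t q)⁻¹) * (t q)) := by rw [e2]
          _ = f (m * (t q * m⁻¹ * (t q)⁻¹)) * f (t q) := map_mul f _ _
          _ = f m * f (t q * m⁻¹ * (t q)⁻¹) * f (t q) := by
              rw [map_mul f m (t q * m⁻¹ * (t q)⁻¹)]
          _ = f m * f (s₀ q * m⁻¹ * (s₀ q)⁻¹) * f (t q) := by rw [hB]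
          _ = f (m * (s₀ q * m⁻¹ * (s₀ q)⁻¹)) * f (t q) := by
              rw [map_mul f m (s₀ q * m⁻¹ * (s₀ q)⁻¹)]
          _ = f (c q) * f (t q) := by rw [hfc]
          _ = f (c q * t q) := (map_mul f _ _).symm
          _ = f (s₁ q) := by rw [e4]
      -- convert the quotient equality back to the required membership
      have h1 : ((m * u) * s₀ q * (m * u)⁻¹)⁻¹ * s₁ q ∈ U (i + 1) := (hfeq _ _).mpr goal'
      have h2 := hVnorm.conj_mem _ h1 ((m * u) * s₀ q * (m * u)⁻¹)
      have e3 : (m * u) * s₀ q * (m * u)⁻¹ *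
          (((m * u) * s₀ q * (m * u)⁻¹)⁻¹ * s₁ q) *
          ((m * u) * s₀ q * (m * u)⁻¹)⁻¹
          = s₁ q * ((m * u) * s₀ q * (m * u)⁻¹)⁻¹ := by group
      rwa [e3] at h2
  obtain ⟨u, hu, h⟩ := key N le_rfl
  refine ⟨u, hu, fun q => ?_⟩
  have := h q
  rw [hUtop, Subgroup.mem_bot, mul_inv_eq_one] at this
  exact this
end
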